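/- Let A ∈ Mₙ(ℝ) satisfy A² = −Iₙ, and let A = S·P be its polar decomposition, with S symmetric positive definite and P orthogonal. Then P² = −Iₙ, S = P⁻¹·S⁻¹·P, and if σ is any symmetric real matrix with exp(σ) = S, then (exp(tσ)·P)² = −Iₙ for every t ∈ ℝ. -/

import Mathlib

open scoped ComplexOrder

noncomputable section

/-- The underlying real vector space of the Lie algebra `g` (coordinates w.r.t. `E₁,…,E₆`). -/
abbrev GV : Type := Fin 6 → ℝ

/-- The basis vectors `E₁,…,E₆` (indexed by `0,…,5`). -/
def E (i : Fin 6) : GV := Pi.single i 1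

/-- The Lie bracket of `g`: the only nonzero brackets of basis vectors are
`[E₁,E₃] = -E₅`, `[E₂,E₄] = E₅`, `[E₁,E₄] = -E₆`, `[E₂,E₃] = -E₆`. -/
def br (X Y : GV) : GV :=
  ![0, 0, 0, 0,
    -(X 0 * Y 2 - X 2 * Y 0) + (X 1 * Y 3 - X 3 * Y 1),
    -(X 0 * Y 3 - X 3 * Y 0) - (X 1 * Y 2 - X 2 * Y 1)]

/-- `J` is a complex structure: `J ∘ J = -id`. -/
def IsCpxStr (J : Module.End ℝ GV) : Prop := ∀ x, J (J x) = -x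

/-- Integrability (Newlander–Nirenberg) condition. -/
def Integrable (J : Module.End ℝ GV) : Prop :=
  ∀ X Y, br (J X) (J Y) = br X Y + J (br (J X) Y) + J (br X (J Y))

/-- `J` induces the standard orientation of `g`. -/
def PosOrient (J : Module.End ℝ GV) : Prop :=
  ∃ v₁ v₂ v₃ : GV,
    0 < (Matrix.of fun i j => ![v₁, J v₁, v₂, J v₂, v₃, J v₃] i j).det

/-- `C⁺(g)`: integrable complex structures inducing the standard orientation. -/
def Cplus : Set (Module.End ℝ GV) := {J | IsCpxStr J ∧ Integrable J ∧ PosOrient J}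

/-- The inner product making `E₁,…,E₆` orthonormal. -/
def inner6 (x y : GV) : ℝ := ∑ i, x i * y i

def IsOrthog (J : Module.End ℝ GV) : Prop := ∀ x y, inner6 (J x) (J y) = inner6 x y

/-- `C⁺(g,g)`: orthogonal members of `C⁺(g)`. -/
def Cgg : Set (Module.End ℝ GV) := {J | J ∈ Cplus ∧ IsOrthog J}

lemma le46 : (4:ℕ) ≤ 6 := by norm_num

/-- Determinant of `(w̄₁, Ĵw̄₁, w̄₂, Ĵw̄₂)` w.r.t. the basis `(Ē₁,…,Ē₄)` of `g/[g,g]`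
(the coordinates of the class of `v` are the first four coordinates of `v`). -/
def hatDet (J : Module.End ℝ GV) (w₁ w₂ : GV) : ℝ :=
  (Matrix.of fun (i : Fin 4) (j : Fin 4) =>
    ![w₁, J w₁, w₂, J w₂] i (Fin.castLE le46 j)).det

/-- `C₊`: members of `C⁺(g)` whose induced structure on `g/[g,g]` is positively oriented. -/
def CplusP : Set (Module.End ℝ GV) :=
  {J | J ∈ Cplus ∧ ∃ w₁ w₂ : GV, 0 < hatDet J w₁ w₂}

/-- `C₋`: members of `C⁺(g)` whose induced structure on `g/[g,g]` is negatively oriented. -/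
def CplusM : Set (Module.End ℝ GV) :=
  {J | J ∈ Cplus ∧ ∃ w₁ w₂ : GV, hatDet J w₁ w₂ < 0}

/-- `ℂ ⊗ g*`, identified with coordinate vectors with respect to the dual basis `e¹,…,e⁶`. -/
abbrev MC : Type := Fin 6 → ℂ

/-- Evaluation of a complexified 1-form on a vector of `g`. -/
def ev (α : MC) (v : GV) : ℂ := ∑ i, α i * v i

/-- The dual basis `e¹,…,e⁶` inside `ℂ ⊗ g*`. -/
def eC (i : Fin 6) : MC := Pi.single i 1

def w1 : MC := eC 0 + Complex.I • eC 1
def w2 : MC := eC 2 + Complex.I • eC 3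
def w3 : MC := eC 4 + Complex.I • eC 5
/-- `ω̄¹` -/
def w1b : MC := eC 0 - Complex.I • eC 1
/-- `ω̄²` -/
def w2b : MC := eC 2 - Complex.I • eC 3
/-- `ω̄³` -/
def w3b : MC := eC 4 - Complex.I • eC 5

/-- The space of `(1,0)`-forms of `J`, a complex subspace of `ℂ ⊗ g*`. -/
def holSub (J : Module.End ℝ GV) : Submodule ℂ MC where
  carrier := {α | ∀ v : GV, ev α (J v) = Complex.I * ev α v}
  add_mem' := by
    intro a b ha hb v
    simp only [ev, Pi.add_apply, add_mul, Finset.sum_add_distrib] at *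
    rw [ha v, hb v]; ring
  zero_mem' := by intro v; simp [ev]
  smul_mem' := by
    intro c α hα v
    simp only [ev, Pi.smul_apply, smul_eq_mul, mul_assoc, ← Finset.mul_sum] at *
    rw [hα v]; ring
/-- `(α₁, α₂, α₃)` is a basis of the space of `(1,0)`-forms of `J`. -/
def IsHolBasis (J : Module.End ℝ GV) (α₁ α₂ α₃ : MC) : Prop :=
  LinearIndependent ℂ ![α₁, α₂, α₃] ∧ Submodule.span ℂ {α₁, α₂, α₃} = holSub J

/-- Inclusion into the exterior algebra of `ℂ ⊗ g*`; wedge products are multiplications there. -/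
def ι : MC →ₗ[ℂ] ExteriorAlgebra ℂ MC := ExteriorAlgebra.ι ℂ

/-- The standard bi-invariant complex structure `J₀`. -/
def J0 : Module.End ℝ GV :=
  Matrix.mulVecLin !![0,-1,0,0,0,0; 1,0,0,0,0,0; 0,0,0,-1,0,0;
                      0,0,1,0,0,0; 0,0,0,0,0,-1; 0,0,0,0,1,0]

/-- The vector space underlying `V = span(E₁,E₂,E₃,E₄)`. -/
abbrev W4 : Type := Fin 4 → ℝ

/-- Inclusion `V = span(E₁,…,E₄) ↪ g`. -/
def incl (w : W4) : GV := fun i => if h : (i : ℕ) < 4 then w ⟨i, h⟩ else 0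

def det4W (v : Fin 4 → W4) : ℝ := (Matrix.of fun i j => v i j).det

/-- The topology on the space of `ℝ`-linear endomorphisms of `g`
(as a subspace of the space of all maps `g → g`). -/
instance : TopologicalSpace (Module.End ℝ GV) :=
  TopologicalSpace.induced (fun f => (f : GV → GV)) inferInstance

/-- The span of `E₁,E₂,E₃,E₄`. -/
def V4span : Submodule ℝ GV := Submodule.span ℝ {E 0, E 1, E 2, E 3}

/-- Injectivity of the matrix exponential on real symmetric matrices. -/
lemma exp_inj_symm {n : ℕ} {a b : Matrix (Fin n) (Fin n) ℝ}
    (ha : IsSelfAdjoint a) (hb : IsSelfAdjoint b)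
    (h : NormedSpace.exp a = NormedSpace.exp b) : a = b := by
  letI : NormedRing (Matrix (Fin n) (Fin n) ℝ) := Matrix.instL2OpNormedRing
  letI : NormedAlgebra ℝ (Matrix (Fin n) (Fin n) ℝ) := Matrix.instL2OpNormedAlgebra
  have h1 := CFC.log_exp a ha
  rw [h, CFC.log_exp b hb] at h1
  exact h1.symm

lemma isSelfAdjoint_of_isSymm {n : ℕ} {a : Matrix (Fin n) (Fin n) ℝ}
    (ha : a.IsSymm) : IsSelfAdjoint a := by
  rw [isSelfAdjoint_iff, Matrix.star_eq_conjTranspose,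
    Matrix.conjTranspose_eq_transpose_of_trivial]
  exact ha

open scoped Matrix in
/-- polar decomposition of an anti-involutive real matrix. -/
theorem stmt14 (n : ℕ) (A S P : Matrix (Fin n) (Fin n) ℝ)
    (hA : A * A = -1) (hS : S.PosDef) (hSsymm : S.IsSymm) (hP : P.transpose * P = 1)
    (hSP : A = S * P) :
    P * P = -1 ∧ S = P⁻¹ * S⁻¹ * P ∧
    ∀ σ : Matrix (Fin n) (Fin n) ℝ, σ.IsSymm → NormedSpace.exp σ = S →
      ∀ t : ℝ,
        (NormedSpace.exp (t • σ) * P) * (NormedSpace.exp (t • σ) * P) = -1 := by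
  have hPPt : P * Pᵀ = 1 := mul_eq_one_comm.mp hP
  have hPunit : IsUnit P := ⟨⟨P, Pᵀ, hPPt, hP⟩, rfl⟩
  have hPinv : P⁻¹ = Pᵀ := Matrix.inv_eq_right_inv hPPt
  have hSunit : IsUnit S.det := (Matrix.isUnit_iff_isUnit_det S).mp hS.isUnit
  have hSSinv : S * S⁻¹ = 1 := Matrix.mul_nonsing_inv S hSunit
  have hSinvS : S⁻¹ * S = 1 := Matrix.nonsing_inv_mul S hSunit
  have hStinv : (S⁻¹)ᵀ = S⁻¹ := by
    rw [Matrix.transpose_nonsing_inv, hSsymm]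
  -- A⁻¹ = -A, and A⁻¹ = P⁻¹ * S⁻¹
  have hAneg : A = -(Pᵀ * S⁻¹) := by
    have h1 : A⁻¹ = -A := by
      refine Matrix.inv_eq_right_inv ?_
      rw [mul_neg, hA, neg_neg]
    have h2 : A⁻¹ = Pᵀ * S⁻¹ := by
      rw [hSP, Matrix.mul_inv_rev, hPinv]
    rw [← h2, h1, neg_neg]
  -- S' = Pᵀ * S⁻¹ * P equals S (uniqueness of positive square roots)
  have hS'psd : (Pᵀ * S⁻¹ * P).PosSemidef := by
    have := (hS.inv.posSemidef).conjTranspose_mul_mul_same P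
    rwa [Matrix.conjTranspose_eq_transpose_of_trivial] at this
  have hsq : (Pᵀ * S⁻¹ * P) ^ 2 = S ^ 2 := by
    have hAAt : A * Aᵀ = S * S := by
      rw [hSP, Matrix.transpose_mul, hSsymm]
      calc S * P * (Pᵀ * S) = S * (P * Pᵀ) * S := by noncomm_ring
        _ = S * S := by rw [hPPt, mul_one]
    have hAAt' : A * Aᵀ = Pᵀ * S⁻¹ * (S⁻¹ * P) := by
      rw [hAneg]
      rw [Matrix.transpose_neg, Matrix.transpose_mul, hStinv, Matrix.transpose_transpose]
      noncomm_ring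
    rw [sq, sq]
    calc Pᵀ * S⁻¹ * P * (Pᵀ * S⁻¹ * P)
        = Pᵀ * S⁻¹ * (P * Pᵀ) * (S⁻¹ * P) := by noncomm_ring
      _ = Pᵀ * S⁻¹ * (S⁻¹ * P) := by rw [hPPt]; noncomm_ring
      _ = A * Aᵀ := hAAt'.symm
      _ = S * S := hAAt
  have hS'eq : Pᵀ * S⁻¹ * P = S := by
    open scoped MatrixOrder in
    rw [← CFC.sqrt_sq _ hS'psd.nonneg, hsq, CFC.sqrt_sq S hS.posSemidef.nonneg]
  -- P = -Pᵀ
  have hPneg : P = -Pᵀ := by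
    have h3 : S * P = -(S * Pᵀ) := by
      calc S * P = A := hSP.symm
        _ = -(Pᵀ * S⁻¹) := hAneg
        _ = -(Pᵀ * S⁻¹ * (P * Pᵀ)) := by rw [hPPt, mul_one]
        _ = -(Pᵀ * S⁻¹ * P * Pᵀ) := by noncomm_ring
        _ = -(S * Pᵀ) := by rw [hS'eq]
    have := congrArg (fun M => S⁻¹ * M) h3
    simpa [← mul_assoc, hSinvS, mul_neg] using this
  have hPP : P * P = -1 := by
    calc P * P = P * -Pᵀ := by rw [← hPneg]
      _ = -(P * Pᵀ) := by rw [mul_neg]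
      _ = -1 := by rw [hPPt]
  refine ⟨hPP, by rw [hPinv, hS'eq], ?_⟩
  intro σ hσ hexpσ t
  -- exp(-σ) = S⁻¹
  have hexpneg : NormedSpace.exp (-σ) = S⁻¹ := by
    rw [Matrix.exp_neg, hexpσ]
  -- Pᵀ * (-σ) * P = σ by injectivity of exp on symmetric matrices
  have hτsymm : (Pᵀ * -σ * P).IsSymm := by
    unfold Matrix.IsSymm
    rw [Matrix.transpose_mul, Matrix.transpose_mul, Matrix.transpose_neg, hσ,
      Matrix.transpose_transpose]
    noncomm_ring
  have hτ : Pᵀ * -σ * P = σ := by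
    refine exp_inj_symm (isSelfAdjoint_of_isSymm hτsymm) (isSelfAdjoint_of_isSymm hσ) ?_
    have := Matrix.exp_conj' P (-σ) hPunit
    rw [hPinv] at this
    rw [this, hexpneg, hS'eq, hexpσ]
  -- hence P * σ * P⁻¹ = -σ
  have hconj : P * σ * P⁻¹ = -σ := by
    rw [hPinv]
    conv_lhs => rw [← hτ]
    calc P * (Pᵀ * -σ * P) * Pᵀ = (P * Pᵀ) * -σ * (P * Pᵀ) := by noncomm_ring
      _ = -σ := by rw [hPPt, one_mul, mul_one]
  have hexpconj : P * NormedSpace.exp (t • σ) * P⁻¹ = (NormedSpace.exp (t • σ))⁻¹ := by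
    rw [← Matrix.exp_conj P (t • σ) hPunit, ← Matrix.exp_neg]
    congr 1
    rw [← neg_smul]
    calc P * t • σ * P⁻¹ = t • (P * σ * P⁻¹) := by
          rw [Matrix.mul_smul, Matrix.smul_mul]
      _ = t • (-σ) := by rw [hconj]
      _ = (-t) • σ := by rw [smul_neg, neg_smul]
  have hPexp : P * NormedSpace.exp (t • σ) = (NormedSpace.exp (t • σ))⁻¹ * P := by
    have := congrArg (fun M => M * P) hexpconj
    simpa [mul_assoc, hPinv, hP] using this
  have hexpunit : IsUnit (NormedSpace.exp (t • σ)).det :=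
    (Matrix.isUnit_iff_isUnit_det _).mp (Matrix.isUnit_exp (t • σ))
  calc NormedSpace.exp (t • σ) * P * (NormedSpace.exp (t • σ) * P)
      = NormedSpace.exp (t • σ) * (P * NormedSpace.exp (t • σ)) * P := by noncomm_ring
    _ = NormedSpace.exp (t • σ) * ((NormedSpace.exp (t • σ))⁻¹ * P) * P := by rw [hPexp]
    _ = (NormedSpace.exp (t • σ) * (NormedSpace.exp (t • σ))⁻¹) * (P * P) := by noncomm_ring
    _ = -1 := by rw [Matrix.mul_nonsing_inv _ hexpunit, one_mul, hPP]

end
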